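/- Suppose φ is a Legendre function on an open convex set C ⊆ ℝⁿ, twice continuously differentiable with ∇²φ(x) positive definite on C, and suppose for every ρ > 0, sup{‖∇²φ(x)⁻¹∇φ(x)‖ : x ∈ C, ‖x‖ ≤ ρ} < ∞. Then for every x̄ in the closure of C, the normal cone N_{cl C}(x̄) is contained in the set S = {d : ∃ x_k → x̄ in C, e_k → 0, ∇²φ(x_k)e_k → d}, i.e., every normal direction at x̄ arises as a limit of Hessians applied to vanishing vectors. -/

import Mathlib

open Matrix Filter Topology

noncomputable def gradVec {n : ℕ} (φ : (Fin n → ℝ) → ℝ) (x : Fin n → ℝ) : Fin n → ℝ :=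
  fun i => fderiv ℝ φ x (Pi.single i 1)

/-- The Hessian matrix of `φ` at `x`, via the second iterated Fréchet derivative. -/
noncomputable def hessMat {n : ℕ} (φ : (Fin n → ℝ) → ℝ) (x : Fin n → ℝ) :
    Matrix (Fin n) (Fin n) ℝ :=
  fun i j => iteratedFDeriv ℝ 2 φ x ![Pi.single i 1, Pi.single j 1]

namespace Stmt5Aux

variable {n : ℕ} {C : Set (Fin n → ℝ)} {φ : (Fin n → ℝ) → ℝ}

lemma dot_self_nonneg' (x : Fin n → ℝ) : 0 ≤ x ⬝ᵥ x :=
  Finset.sum_nonneg fun i _ => mul_self_nonneg _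

lemma norm_le_sqrt_dot (x : Fin n → ℝ) : ‖x‖ ≤ Real.sqrt (x ⬝ᵥ x) := by
  refine (pi_norm_le_iff_of_nonneg (Real.sqrt_nonneg _)).2 fun i => ?_
  have h1 : x i * x i ≤ x ⬝ᵥ x := by
    refine Finset.single_le_sum (f := fun j => x j * x j) (fun j _ => mul_self_nonneg _) (Finset.mem_univ i)
  calc ‖x i‖ = Real.sqrt (x i * x i) := by
        rw [Real.sqrt_mul_self_eq_abs]; rfl
    _ ≤ Real.sqrt (x ⬝ᵥ x) := Real.sqrt_le_sqrt h1

lemma dot_le_sqrt (x y : Fin n → ℝ) : x ⬝ᵥ y ≤ Real.sqrt (x ⬝ᵥ x) * Real.sqrt (y ⬝ᵥ y) := by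
  have h := Finset.sum_mul_sq_le_sq_mul_sq Finset.univ x y
  have h2 : (x ⬝ᵥ y)^2 ≤ (x ⬝ᵥ x) * (y ⬝ᵥ y) := by
    simpa [dotProduct, sq] using h
  calc x ⬝ᵥ y ≤ |x ⬝ᵥ y| := le_abs_self _
    _ = Real.sqrt ((x ⬝ᵥ y)^2) := (Real.sqrt_sq_eq_abs _).symm
    _ ≤ Real.sqrt ((x ⬝ᵥ x) * (y ⬝ᵥ y)) := Real.sqrt_le_sqrt h2
    _ = _ := Real.sqrt_mul (dot_self_nonneg' x) _

lemma sqrt_dot_le_norm (x : Fin n → ℝ) : Real.sqrt (x ⬝ᵥ x) ≤ Real.sqrt n * ‖x‖ := by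
  have h : x ⬝ᵥ x ≤ (n : ℝ) * (‖x‖ * ‖x‖) := by
    have : ∀ i, x i * x i ≤ ‖x‖ * ‖x‖ := fun i => by
      have := norm_le_pi_norm x i
      have h0 : |x i| ≤ ‖x‖ := this
      nlinarith [abs_nonneg (x i), neg_abs_le (x i), le_abs_self (x i)]
    calc x ⬝ᵥ x ≤ ∑ _i : Fin n, ‖x‖ * ‖x‖ := Finset.sum_le_sum fun i _ => this i
      _ = (n : ℝ) * (‖x‖ * ‖x‖) := by simp [Finset.sum_const, mul_comm]
  calc Real.sqrt (x ⬝ᵥ x) ≤ Real.sqrt ((n:ℝ) * (‖x‖ * ‖x‖)) := Real.sqrt_le_sqrt h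
    _ = Real.sqrt n * ‖x‖ := by
        rw [Real.sqrt_mul (Nat.cast_nonneg n), Real.sqrt_mul_self (norm_nonneg x)]

lemma sqrt_dot_triangle (p q : Fin n → ℝ) :
    Real.sqrt ((p + q) ⬝ᵥ (p + q)) ≤ Real.sqrt (p ⬝ᵥ p) + Real.sqrt (q ⬝ᵥ q) := by
  set P := Real.sqrt (p ⬝ᵥ p)
  set Q := Real.sqrt (q ⬝ᵥ q)
  have hP : 0 ≤ P := Real.sqrt_nonneg _
  have hQ : 0 ≤ Q := Real.sqrt_nonneg _
  have hpp : p ⬝ᵥ p = P^2 := (Real.sq_sqrt (dot_self_nonneg' p)).symm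
  have hqq : q ⬝ᵥ q = Q^2 := (Real.sq_sqrt (dot_self_nonneg' q)).symm
  have hpq : p ⬝ᵥ q ≤ P * Q := dot_le_sqrt p q
  have hexp : (p + q) ⬝ᵥ (p + q) ≤ (P + Q)^2 := by
    have : (p + q) ⬝ᵥ (p + q) = p ⬝ᵥ p + 2 * (p ⬝ᵥ q) + q ⬝ᵥ q := by
      simp [add_dotProduct, dotProduct_add, dotProduct_comm q p]; ring
    rw [this, hpp, hqq]; nlinarith
  calc Real.sqrt ((p + q) ⬝ᵥ (p + q)) ≤ Real.sqrt ((P + Q)^2) := Real.sqrt_le_sqrt hexp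
    _ = P + Q := Real.sqrt_sq (by positivity)

lemma tendsto_dot {f g : ℕ → Fin n → ℝ} {a b : Fin n → ℝ}
    (hf : Tendsto f atTop (𝓝 a)) (hg : Tendsto g atTop (𝓝 b)) :
    Tendsto (fun k => f k ⬝ᵥ g k) atTop (𝓝 (a ⬝ᵥ b)) := by
  have h1 : ∀ i, Tendsto (fun k => f k i) atTop (𝓝 (a i)) := fun i =>
    (tendsto_pi_nhds.1 hf i)
  have h2 : ∀ i, Tendsto (fun k => g k i) atTop (𝓝 (b i)) := fun i =>
    (tendsto_pi_nhds.1 hg i)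
  exact tendsto_finset_sum _ fun i _ => (h1 i).mul (h2 i)

lemma dot_self_zero {x : Fin n → ℝ} (h : x ⬝ᵥ x = 0) : x = 0 := by
  have := dotProduct_self_eq_zero (v := x)
  exact this.1 h

lemma single_sum (w : Fin n → ℝ) : ∑ i, w i • (Pi.single i 1 : Fin n → ℝ) = w := by
  ext j
  simp [Finset.sum_apply, Pi.single_apply]

lemma gradVec_dot (φ : (Fin n → ℝ) → ℝ) (x w : Fin n → ℝ) :
    gradVec φ x ⬝ᵥ w = fderiv ℝ φ x w := by
  conv_rhs => rw [← single_sum w]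
  rw [map_sum]
  simp only [_root_.map_smul]
  simp [gradVec, dotProduct, smul_eq_mul, mul_comm]

lemma fderiv_le_sub (hconv : ConvexOn ℝ C φ)
    {x y : Fin n → ℝ} (hx : x ∈ C) (hy : y ∈ C) (hd : DifferentiableAt ℝ φ x) :
    fderiv ℝ φ x (y - x) ≤ φ y - φ x := by
  set L : ℝ →ᵃ[ℝ] (Fin n → ℝ) := AffineMap.lineMap x y with hL
  have hg : ConvexOn ℝ (L ⁻¹' C) (φ ∘ L) := hconv.comp_affineMap L
  have h0 : (0:ℝ) ∈ L ⁻¹' C := by simp [hL, AffineMap.lineMap_apply_zero, hx]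
  have h1 : (1:ℝ) ∈ L ⁻¹' C := by simp [hL, AffineMap.lineMap_apply_one, hy]
  have hLd : HasDerivAt (fun s : ℝ => L s) (y - x) 0 := by
    have : HasDerivAt (fun s : ℝ => s • (y - x) + x) ((1:ℝ) • (y - x)) 0 :=
      ((hasDerivAt_id (0:ℝ)).smul_const (y - x)).add_const x
    simpa [hL, AffineMap.lineMap_apply] using this
  have hcomp : HasDerivAt (φ ∘ L) (fderiv ℝ φ x (y - x)) 0 := by
    have hgx : HasFDerivAt φ (fderiv ℝ φ x) (L 0) := by
      rw [hL]; simpa [AffineMap.lineMap_apply_zero] using hd.hasFDerivAt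
    exact hgx.comp_hasDerivAt 0 hLd
  have := hg.le_slope_of_hasDerivAt h0 h1 zero_lt_one hcomp
  rw [slope_def_field] at this
  simpa [hL, AffineMap.lineMap_apply_zero, AffineMap.lineMap_apply_one, div_one] using this

lemma gradVec_mono (hconv : ConvexOn ℝ C φ)
    {x y : Fin n → ℝ} (hx : x ∈ C) (hy : y ∈ C)
    (hdx : DifferentiableAt ℝ φ x) (hdy : DifferentiableAt ℝ φ y) :
    0 ≤ (gradVec φ x - gradVec φ y) ⬝ᵥ (x - y) := by
  have h1 := fderiv_le_sub hconv hx hy hdx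
  have h2 := fderiv_le_sub hconv hy hx hdy
  have e1 : gradVec φ x ⬝ᵥ (x - y) = -(fderiv ℝ φ x (y - x)) := by
    rw [gradVec_dot, ← map_neg]; congr 1; abel
  have e2 : gradVec φ y ⬝ᵥ (x - y) = fderiv ℝ φ y (x - y) := gradVec_dot _ _ _
  rw [sub_dotProduct, e1, e2]
  linarith

/-- evaluation CLM -/
noncomputable def lam (n : ℕ) : ((Fin n → ℝ) →L[ℝ] ℝ) →L[ℝ] (Fin n → ℝ) :=
  ContinuousLinearMap.pi fun i => ContinuousLinearMap.apply ℝ ℝ (Pi.single i 1)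

lemma lam_apply (L : (Fin n → ℝ) →L[ℝ] ℝ) (i : Fin n) : lam n L i = L (Pi.single i 1) := rfl

lemma gradVec_eq_lam (φ : (Fin n → ℝ) → ℝ) : gradVec φ = fun x => lam n (fderiv ℝ φ x) := rfl

lemma hasFDerivAt_gradVec (hCopen : IsOpen C) (hφ : ContDiffOn ℝ 2 φ C)
    {x : Fin n → ℝ} (hx : x ∈ C) :
    HasFDerivAt (gradVec φ)
      (LinearMap.toContinuousLinearMap (Matrix.mulVecLin (hessMat φ x))) x := by
  have hat : ContDiffAt ℝ 2 φ x := hφ.contDiffAt (hCopen.mem_nhds hx)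
  have hF : ContDiffAt ℝ 1 (fderiv ℝ φ) x := hat.fderiv_right (le_refl _)
  have hdF : DifferentiableAt ℝ (fderiv ℝ φ) x := hF.differentiableAt one_ne_zero
  set f'' := fderiv ℝ (fderiv ℝ φ) x with hf''
  have hsym : ∀ v w, f'' v w = f'' w v := fun v w => hat.isSymmSndFDerivAt (by simp) v w
  have hcomp : HasFDerivAt (gradVec φ) ((lam n).comp f'') x := by
    rw [gradVec_eq_lam]
    exact (lam n).hasFDerivAt.comp x hdF.hasFDerivAt
  convert hcomp using 1
  ext w i
  have h1 : ((lam n).comp f'') w i = f'' w (Pi.single i 1) := rfl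
  rw [h1, hsym w (Pi.single i 1)]
  have hexp : f'' (Pi.single i 1) w = ∑ j, w j * f'' (Pi.single i 1) (Pi.single j 1) := by
    conv_lhs => rw [← single_sum w]
    rw [map_sum]
    simp [smul_eq_mul]
  have hmv : (LinearMap.toContinuousLinearMap (Matrix.mulVecLin (hessMat φ x))) w i
      = ∑ j, hessMat φ x i j * w j := by
    simp [Matrix.mulVecLin, Matrix.mulVec, dotProduct]
  rw [hmv, hexp]
  refine Finset.sum_congr rfl fun j _ => ?_
  have : hessMat φ x i j = f'' (Pi.single i 1) (Pi.single j 1) := by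
    rw [hessMat, iteratedFDeriv_two_apply]
    simp [hf'']
  rw [this, mul_comm]

lemma contDiffAt_gradVec (hCopen : IsOpen C) (hφ : ContDiffOn ℝ 2 φ C)
    {x : Fin n → ℝ} (hx : x ∈ C) : ContDiffAt ℝ 1 (gradVec φ) x := by
  have hat : ContDiffAt ℝ 2 φ x := hφ.contDiffAt (hCopen.mem_nhds hx)
  have hF : ContDiffAt ℝ 1 (fderiv ℝ φ) x := hat.fderiv_right (le_refl _)
  rw [gradVec_eq_lam]
  exact ((lam n).contDiff.comp_contDiffAt x hF)

-- invertibility of t • hess + id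
lemma inj_A {t : ℝ} (ht : 0 < t) {H : Matrix (Fin n) (Fin n) ℝ} (hH : H.PosDef) :
    Function.Injective fun w : Fin n → ℝ => t • (H *ᵥ w) + w := by
  intro w₁ w₂ hek
  have hw : t • (H *ᵥ (w₁ - w₂)) + (w₁ - w₂) = 0 := by
    have : H *ᵥ (w₁ - w₂) = H *ᵥ w₁ - H *ᵥ w₂ := by
      rw [Matrix.mulVec_sub]
    rw [this, smul_sub]
    simp only at hek
    rw [sub_add_sub_comm, hek, sub_self]
  set w := w₁ - w₂ with hwdef
  by_contra hne
  have hw0 : w ≠ 0 := sub_ne_zero.2 hne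
  have hdot : (t • (H *ᵥ w) + w) ⬝ᵥ w = 0 := by rw [hw]; simp
  rw [add_dotProduct, smul_dotProduct] at hdot
  have h1 : 0 < (H *ᵥ w) ⬝ᵥ w := by
    have := hH.dotProduct_mulVec_pos hw0
    simpa [dotProduct_comm] using this
  have h2 : 0 < w ⬝ᵥ w := by
    rcases (dotProduct_self_eq_zero (v := w)).not.2 hw0 with h
    have hnn : 0 ≤ w ⬝ᵥ w := Finset.sum_nonneg fun i _ => mul_self_nonneg _
    exact lt_of_le_of_ne hnn (Ne.symm h)
  have : (0:ℝ) < t • ((H *ᵥ w) ⬝ᵥ w) + w ⬝ᵥ w := by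
    have := mul_pos ht h1
    simp only [smul_eq_mul]
    linarith
  rw [hdot] at this
  exact lt_irrefl _ this

lemma surjPsi (hCopen : IsOpen C) (hCne : C.Nonempty)
    (hφ : ContDiffOn ℝ 2 φ C) (hconv : ConvexOn ℝ C φ)
    (hPD : ∀ x ∈ C, (hessMat φ x).PosDef)
    (hblow : ∀ (xk : ℕ → Fin n → ℝ) (b : Fin n → ℝ), (∀ k, xk k ∈ C) →
      b ∈ frontier C → Tendsto xk atTop (𝓝 b) →
      Tendsto (fun k => ‖gradVec φ (xk k)‖) atTop atTop)
    {t : ℝ} (ht : 0 < t) (u : Fin n → ℝ) :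
    ∃ x ∈ C, t • gradVec φ x + (x - u) = 0 := by
  set Ψ : (Fin n → ℝ) → (Fin n → ℝ) := fun x => t • gradVec φ x + (x - u) with hΨdef
  have hdiffφ : ∀ x ∈ C, DifferentiableAt ℝ φ x := fun x hx =>
    (hφ.contDiffAt (hCopen.mem_nhds hx)).differentiableAt two_ne_zero
  set S := Ψ '' C with hSdef
  -- Ψ is continuous on C
  have hΨcont : ∀ x ∈ C, ContinuousAt Ψ x := by
    intro x hx
    have h1 : ContinuousAt (gradVec φ) x := (contDiffAt_gradVec hCopen hφ hx).continuousAt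
    exact ((h1.const_smul t).add ((continuousAt_id).sub continuousAt_const))
  -- S is open
  have hSopen : IsOpen S := by
    rw [isOpen_iff_mem_nhds]
    rintro y ⟨x, hx, rfl⟩
    set M := LinearMap.toContinuousLinearMap (Matrix.mulVecLin (hessMat φ x)) with hM
    set A : (Fin n → ℝ) →L[ℝ] (Fin n → ℝ) := t • M + ContinuousLinearMap.id ℝ _ with hA
    have hFD : HasFDerivAt Ψ A x := by
      have h1 : HasFDerivAt (fun x => t • gradVec φ x) (t • M) x :=
        (hasFDerivAt_gradVec hCopen hφ hx).const_smul t
      have h2 : HasFDerivAt (fun x : Fin n → ℝ => x - u) (ContinuousLinearMap.id ℝ _) x :=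
        (hasFDerivAt_id x).sub_const u
      exact h1.add h2
    have hΨcd : ContDiffAt ℝ 1 Ψ x := by
      have hg : ContDiffAt ℝ 1 (gradVec φ) x := contDiffAt_gradVec hCopen hφ hx
      exact ((contDiffAt_const (c := t)).smul hg).add ((contDiffAt_id).sub contDiffAt_const)
    have hstrict : HasStrictFDerivAt Ψ A x := by
      have := hΨcd.hasStrictFDerivAt one_ne_zero
      rwa [hFD.fderiv] at this
    -- A is a linear equivalence
    have hinj : Function.Injective A := by
      have : (A : (Fin n → ℝ) → (Fin n → ℝ)) = fun w => t • (hessMat φ x *ᵥ w) + w := by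
        funext w
        simp [hA, hM, Matrix.mulVecLin]
      rw [this]
      exact inj_A ht (hPD x hx)
    have hsurj : Function.Surjective (A : (Fin n → ℝ) →ₗ[ℝ] (Fin n → ℝ)) :=
      LinearMap.injective_iff_surjective.1 hinj
    let e : (Fin n → ℝ) ≃ₗ[ℝ] (Fin n → ℝ) :=
      LinearEquiv.ofBijective (A : (Fin n → ℝ) →ₗ[ℝ] (Fin n → ℝ)) ⟨hinj, hsurj⟩
    let e' : (Fin n → ℝ) ≃L[ℝ] (Fin n → ℝ) := e.toContinuousLinearEquiv
    have hcoe : (e' : (Fin n → ℝ) →L[ℝ] (Fin n → ℝ)) = A := by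
      ext w; rfl
    have hstrict' : HasStrictFDerivAt Ψ (e' : (Fin n → ℝ) →L[ℝ] (Fin n → ℝ)) x := by
      rwa [hcoe]
    have hmap := hstrict'.map_nhds_eq_of_equiv
    rw [← hmap]
    exact Filter.image_mem_map (hCopen.mem_nhds hx)
  -- S is closed
  have hSclosed : IsClosed S := by
    refine isClosed_of_closure_subset fun y hy => ?_
    obtain ⟨w, hw, hwlim⟩ := mem_closure_iff_seq_limit.1 hy
    choose xs hxs hΨxs using hw
    obtain ⟨z, hz⟩ := hCne
    -- bound on the sequence
    have hkey : ∀ j, ‖xs j - z‖ ≤ Real.sqrt n * ‖Ψ (xs j) - Ψ z‖ := by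
      intro j
      have hc : Ψ (xs j) - Ψ z = t • (gradVec φ (xs j) - gradVec φ z) + (xs j - z) := by
        simp only [hΨdef, smul_sub]
        abel
      set c := Ψ (xs j) - Ψ z with hcdef
      set d := xs j - z with hddef
      have hmono : 0 ≤ (gradVec φ (xs j) - gradVec φ z) ⬝ᵥ d :=
        gradVec_mono hconv (hxs j) hz (hdiffφ _ (hxs j)) (hdiffφ _ hz)
      have hdd : d ⬝ᵥ d ≤ c ⬝ᵥ d := by
        rw [hc, add_dotProduct, smul_dotProduct]
        have : 0 ≤ t • ((gradVec φ (xs j) - gradVec φ z) ⬝ᵥ d) := by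
          simp only [smul_eq_mul]
          exact mul_nonneg ht.le hmono
        linarith
      have hcs : c ⬝ᵥ d ≤ Real.sqrt (c ⬝ᵥ c) * Real.sqrt (d ⬝ᵥ d) := dot_le_sqrt c d
      set D := Real.sqrt (d ⬝ᵥ d) with hD
      have hD2 : d ⬝ᵥ d = D ^ 2 := (Real.sq_sqrt (dot_self_nonneg' d)).symm
      have hDle : D ≤ Real.sqrt (c ⬝ᵥ c) := by
        have hDnn : 0 ≤ D := Real.sqrt_nonneg _
        have hKnn : 0 ≤ Real.sqrt (c ⬝ᵥ c) := Real.sqrt_nonneg _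
        nlinarith [hdd, hcs, hD2]
      calc ‖xs j - z‖ ≤ D := norm_le_sqrt_dot d
        _ ≤ Real.sqrt (c ⬝ᵥ c) := hDle
        _ ≤ Real.sqrt n * ‖c‖ := sqrt_dot_le_norm c
    -- eventual bound
    obtain ⟨N, hN⟩ := Metric.tendsto_atTop.1 hwlim 1 one_pos
    set R := ‖z‖ + Real.sqrt n * (1 + ‖y - Ψ z‖) with hR
    have hball : ∀ l : ℕ, xs (N + l) ∈ Metric.closedBall (0 : Fin n → ℝ) R := by
      intro l
      rw [Metric.mem_closedBall, dist_zero_right]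
      have h1 := hkey (N + l)
      have h2 : ‖Ψ (xs (N + l)) - Ψ z‖ ≤ 1 + ‖y - Ψ z‖ := by
        have h3 := hN (N + l) (Nat.le_add_right N l)
        rw [dist_eq_norm] at h3
        calc ‖Ψ (xs (N + l)) - Ψ z‖ ≤ ‖Ψ (xs (N + l)) - y‖ + ‖y - Ψ z‖ :=
              norm_sub_le_norm_sub_add_norm_sub _ _ _
          _ ≤ 1 + ‖y - Ψ z‖ := by
              rw [hΨxs]
              exact add_le_add_left h3.le _
      calc ‖xs (N + l)‖ ≤ ‖xs (N + l) - z‖ + ‖z‖ := by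
            simpa using norm_add_le (xs (N + l) - z) z
        _ ≤ Real.sqrt n * ‖Ψ (xs (N + l)) - Ψ z‖ + ‖z‖ := by linarith
        _ ≤ R := by
            rw [hR]
            have hs : (0:ℝ) ≤ Real.sqrt n := Real.sqrt_nonneg _
            nlinarith
    obtain ⟨xstar, hxstarball, ms, hms, hlim⟩ :=
      (isCompact_closedBall (0 : Fin n → ℝ) R).tendsto_subseq hball
    set j : ℕ → ℕ := fun l => N + ms l with hj
    have hjtop : Tendsto j atTop atTop :=
      tendsto_atTop_mono (fun l => Nat.le_add_left (ms l) N) hms.tendsto_atTop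
    have hxslim : Tendsto (fun l => xs (j l)) atTop (𝓝 xstar) := hlim
    have hxstarcl : xstar ∈ closure C :=
      mem_closure_of_tendsto hxslim (Filter.Eventually.of_forall fun l => hxs _)
    have hwj : Tendsto (fun l => Ψ (xs (j l))) atTop (𝓝 y) := by
      have : (fun l => Ψ (xs (j l))) = fun l => w (j l) := by
        funext l; rw [hΨxs]
      rw [this]
      exact hwlim.comp hjtop
    by_cases hxstarC : xstar ∈ C
    · have hcont := hΨcont xstar hxstarC
      have : Tendsto (fun l => Ψ (xs (j l))) atTop (𝓝 (Ψ xstar)) :=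
        hcont.tendsto.comp hxslim
      have hyeq : y = Ψ xstar := tendsto_nhds_unique hwj this
      exact ⟨xstar, hxstarC, hyeq.symm⟩
    · exfalso
      have hfront : xstar ∈ frontier C := by
        rw [hCopen.frontier_eq]
        exact ⟨hxstarcl, hxstarC⟩
      have hblow' := hblow (fun l => xs (j l)) xstar (fun l => hxs _) hfront hxslim
      -- but gradVec converges
      have hgconv : Tendsto (fun l => gradVec φ (xs (j l))) atTop
          (𝓝 (t⁻¹ • (y - xstar + u))) := by
        have heq : ∀ l, gradVec φ (xs (j l)) =
            t⁻¹ • (Ψ (xs (j l)) - xs (j l) + u) := by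
          intro l
          have : Ψ (xs (j l)) - xs (j l) + u = t • gradVec φ (xs (j l)) := by
            simp only [hΨdef]
            abel
          rw [this, smul_smul, inv_mul_cancel₀ ht.ne', one_smul]
        simp only [heq]
        exact ((hwj.sub hxslim).add tendsto_const_nhds).const_smul t⁻¹
      exact not_tendsto_atTop_of_tendsto_nhds hgconv.norm hblow'
  -- S is all of ℝⁿ
  have hSuniv : S = Set.univ := by
    refine IsClopen.eq_univ ⟨hSclosed, hSopen⟩ ?_
    obtain ⟨z, hz⟩ := hCne
    exact ⟨Ψ z, z, hz, rfl⟩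
  have h0 : (0 : Fin n → ℝ) ∈ S := by rw [hSuniv]; trivial
  obtain ⟨x, hx, hx0⟩ := h0
  exact ⟨x, hx, hx0⟩

end Stmt5Aux

open Stmt5Aux

set_option maxHeartbeats 2000000 in
theorem stmt5 {n : ℕ} (C : Set (Fin n → ℝ)) (φ : (Fin n → ℝ) → ℝ)
    (hCopen : IsOpen C) (hCconv : Convex ℝ C) (hCne : C.Nonempty)
    (hφ : ContDiffOn ℝ 2 φ C) (hstrict : StrictConvexOn ℝ C φ)
    (hPD : ∀ x ∈ C, (hessMat φ x).PosDef)
    (hblow : ∀ (xk : ℕ → Fin n → ℝ) (b : Fin n → ℝ), (∀ k, xk k ∈ C) →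
      b ∈ frontier C → Tendsto xk atTop (𝓝 b) →
      Tendsto (fun k => ‖gradVec φ (xk k)‖) atTop atTop)
    (hsup : ∀ ρ > (0:ℝ), ∃ M : ℝ, ∀ x ∈ C, ‖x‖ ≤ ρ →
      ‖(hessMat φ x)⁻¹ *ᵥ gradVec φ x‖ ≤ M) :
    ∀ xbar ∈ closure C,
      {v : Fin n → ℝ | ∀ y ∈ closure C, v ⬝ᵥ (y - xbar) ≤ 0} ⊆
      {d : Fin n → ℝ | ∃ (xk ek : ℕ → Fin n → ℝ),
        (∀ k, xk k ∈ C) ∧ Tendsto xk atTop (𝓝 xbar) ∧ Tendsto ek atTop (𝓝 0) ∧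
        Tendsto (fun k => hessMat φ (xk k) *ᵥ ek k) atTop (𝓝 d)} := by
  intro xbar hxbar v hv
  obtain ⟨z, hz⟩ := hCne
  have hconv : ConvexOn ℝ C φ := hstrict.convexOn
  have hdiffφ : ∀ x ∈ C, DifferentiableAt ℝ φ x := fun x hx =>
    (hφ.contDiffAt (hCopen.mem_nhds hx)).differentiableAt two_ne_zero
  set u : Fin n → ℝ := xbar + v with hu
  set t : ℕ → ℝ := fun k => 1 / (k + 1) with htdef
  have htpos : ∀ k, 0 < t k := fun k => by positivity
  have htle1 : ∀ k, t k ≤ 1 := fun k => by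
    rw [htdef]
    rw [div_le_one (by positivity)]
    simp
  have ht0 : Tendsto t atTop (𝓝 0) := tendsto_one_div_add_atTop_nhds_zero_nat
  choose xk hxkC hxkEq using fun k =>
    surjPsi hCopen ⟨z, hz⟩ hφ hconv hPD hblow (htpos k) u
  -- the basic gradient identity
  have hgrad : ∀ k, t k • gradVec φ (xk k) = u - xk k := by
    intro k
    have h := eq_sub_of_add_eq (hxkEq k)
    rwa [zero_sub, neg_sub] at h
  -- variational inequality
  have hVI : ∀ k, ∀ y ∈ C,
      t k * (gradVec φ y ⬝ᵥ (xk k - y)) ≤ (u - xk k) ⬝ᵥ (xk k - y) := by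
    intro k y hy
    have hmono := gradVec_mono hconv (hxkC k) hy (hdiffφ _ (hxkC k)) (hdiffφ _ hy)
    rw [sub_dotProduct] at hmono
    have h1 : t k * (gradVec φ (xk k) ⬝ᵥ (xk k - y)) = (u - xk k) ⬝ᵥ (xk k - y) := by
      rw [← hgrad k, smul_dotProduct, smul_eq_mul]
    nlinarith [mul_le_mul_of_nonneg_left hmono (htpos k).le]
  -- boundedness
  set G : ℝ := Real.sqrt (gradVec φ z ⬝ᵥ gradVec φ z) with hG
  set Q : ℝ := Real.sqrt ((u - z) ⬝ᵥ (u - z)) with hQ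
  set B : ℝ := Q + G + G * Q + 1 with hB
  set R : ℝ := ‖u‖ + B with hRdef
  have hGnn : 0 ≤ G := Real.sqrt_nonneg _
  have hQnn : 0 ≤ Q := Real.sqrt_nonneg _
  have hPbound : ∀ k, Real.sqrt ((u - xk k) ⬝ᵥ (u - xk k)) ≤ B := by
    intro k
    set a := xk k with ha
    set P := Real.sqrt ((u - a) ⬝ᵥ (u - a)) with hP
    have hPnn : 0 ≤ P := Real.sqrt_nonneg _
    set d := a - z with hd
    set D := Real.sqrt (d ⬝ᵥ d) with hD
    have hDnn : 0 ≤ D := Real.sqrt_nonneg _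
    -- D ≤ P + Q
    have hDle : D ≤ P + Q := by
      have hsum : d = (a - u) + (u - z) := by rw [hd]; abel
      have htr := sqrt_dot_triangle (a - u) (u - z)
      have hswap : (a - u) ⬝ᵥ (a - u) = (u - a) ⬝ᵥ (u - a) := by
        have : a - u = -(u - a) := by abel
        rw [this, neg_dotProduct, dotProduct_neg, neg_neg]
      rw [hswap] at htr
      rw [hD, hsum]
      exact htr.trans (by rw [hP, hQ])
    -- lower bound for the VI left side
    have hlow : -(G * D) ≤ t k * (gradVec φ z ⬝ᵥ (a - z)) := by
      have h1 : -(G * D) ≤ gradVec φ z ⬝ᵥ d := by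
        have := dot_le_sqrt (-(gradVec φ z)) d
        rw [neg_dotProduct] at this
        have h2 : (-(gradVec φ z)) ⬝ᵥ (-(gradVec φ z)) = gradVec φ z ⬝ᵥ gradVec φ z := by
          rw [neg_dotProduct, dotProduct_neg, neg_neg]
        rw [h2] at this
        rw [← hG, ← hD] at this
        linarith
      rcases le_or_gt (gradVec φ z ⬝ᵥ d) 0 with hle | hlt
      · have : t k * (gradVec φ z ⬝ᵥ d) ≥ 1 * (gradVec φ z ⬝ᵥ d) := by
          nlinarith [htpos k, htle1 k]
        rw [hd] at *
        nlinarith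
      · have : 0 ≤ t k * (gradVec φ z ⬝ᵥ d) := le_of_lt (mul_pos (htpos k) hlt)
        rw [hd] at *
        nlinarith [mul_nonneg hGnn hDnn]
    -- upper bound for the VI right side
    have hup : (u - a) ⬝ᵥ (a - z) ≤ -(P^2) + P * Q := by
      have hsplit : (u - a) ⬝ᵥ (a - z) = -((u - a) ⬝ᵥ (u - a)) + (u - a) ⬝ᵥ (u - z) := by
        have : a - z = -(u - a) + (u - z) := by abel
        rw [this, dotProduct_add, dotProduct_neg]
      have hPP : (u - a) ⬝ᵥ (u - a) = P^2 := (Real.sq_sqrt (dot_self_nonneg' _)).symm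
      have hCS : (u - a) ⬝ᵥ (u - z) ≤ P * Q := by
        have := dot_le_sqrt (u - a) (u - z)
        rwa [← hP, ← hQ] at this
      rw [hsplit, hPP]
      linarith
    have hVIz := hVI k z hz
    have hchain : -(G * (P + Q)) ≤ -(P^2) + P * Q := by
      have h1 : -(G * (P + Q)) ≤ -(G * D) := by nlinarith
      calc -(G * (P + Q)) ≤ -(G * D) := h1
        _ ≤ t k * (gradVec φ z ⬝ᵥ (a - z)) := hlow
        _ ≤ (u - a) ⬝ᵥ (a - z) := hVIz
        _ ≤ -(P^2) + P * Q := hup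
    -- conclude P ≤ B
    by_contra hcon
    push_neg at hcon
    have hPB : B < P := hcon
    have hGQ : 0 ≤ G * Q := mul_nonneg hGnn hQnn
    have hB1 : G * Q + 1 ≤ B := by rw [hB]; nlinarith
    have hPgt : Q + G + 1 < P := by rw [hB] at hPB; nlinarith
    have hPpos : 0 < P := by nlinarith
    nlinarith [mul_pos (show (0:ℝ) < P - Q - G - 1 by linarith) hPpos]
  have hbound : ∀ k, ‖xk k‖ ≤ R := by
    intro k
    have h1 : ‖xk k - u‖ ≤ Real.sqrt ((u - xk k) ⬝ᵥ (u - xk k)) := by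
      have := norm_le_sqrt_dot (xk k - u)
      have hswap : (xk k - u) ⬝ᵥ (xk k - u) = (u - xk k) ⬝ᵥ (u - xk k) := by
        have h : xk k - u = -(u - xk k) := by abel
        rw [h, neg_dotProduct, dotProduct_neg, neg_neg]
      rwa [hswap] at this
    calc ‖xk k‖ ≤ ‖xk k - u‖ + ‖u‖ := by
          simpa using norm_add_le (xk k - u) u
      _ ≤ B + ‖u‖ := by
          have := (h1.trans (hPbound k))
          linarith
      _ = R := by rw [hRdef]; ring
  have hR0 : 0 ≤ R := le_trans (norm_nonneg _) (hbound 0)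
  -- convergence of xk to xbar
  have hxklim : Tendsto xk atTop (𝓝 xbar) := by
    refine tendsto_of_subseq_tendsto fun ns hns => ?_
    have hball : ∀ l : ℕ, xk (ns l) ∈ Metric.closedBall (0 : Fin n → ℝ) R := by
      intro l
      rw [Metric.mem_closedBall, dist_zero_right]
      exact hbound _
    obtain ⟨xstar, _, ms, hmsmono, hlim⟩ :=
      (isCompact_closedBall (0 : Fin n → ℝ) R).tendsto_subseq hball
    refine ⟨ms, ?_⟩
    set q : ℕ → Fin n → ℝ := fun l => xk (ns (ms l)) with hqdef
    have hqlim : Tendsto q atTop (𝓝 xstar) := hlim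
    have hnsms : Tendsto (fun l => ns (ms l)) atTop atTop :=
      hns.comp hmsmono.tendsto_atTop
    have hxstarcl : xstar ∈ closure C :=
      mem_closure_of_tendsto hqlim (Filter.Eventually.of_forall fun l => hxkC _)
    -- limit variational inequality
    have h1 : ∀ y ∈ C, 0 ≤ (u - xstar) ⬝ᵥ (xstar - y) := by
      intro y hy
      have hL : Tendsto (fun l => (u - q l) ⬝ᵥ (q l - y)) atTop
          (𝓝 ((u - xstar) ⬝ᵥ (xstar - y))) :=
        tendsto_dot (tendsto_const_nhds.sub hqlim) (hqlim.sub tendsto_const_nhds)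
      have hRt : Tendsto (fun l => t (ns (ms l)) * (gradVec φ y ⬝ᵥ (q l - y))) atTop
          (𝓝 0) := by
        have htl : Tendsto (fun l => t (ns (ms l))) atTop (𝓝 0) := ht0.comp hnsms
        have hdot : Tendsto (fun l => gradVec φ y ⬝ᵥ (q l - y)) atTop
            (𝓝 (gradVec φ y ⬝ᵥ (xstar - y))) :=
          tendsto_dot tendsto_const_nhds (hqlim.sub tendsto_const_nhds)
        simpa using htl.mul hdot
      exact le_of_tendsto_of_tendsto' hRt hL fun l => hVI _ y hy
    -- pass to y = xbar
    obtain ⟨ys, hys, hyslim⟩ := mem_closure_iff_seq_limit.1 hxbar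
    have h2 : 0 ≤ (u - xstar) ⬝ᵥ (xstar - xbar) := by
      have hLm : Tendsto (fun m => (u - xstar) ⬝ᵥ (xstar - ys m)) atTop
          (𝓝 ((u - xstar) ⬝ᵥ (xstar - xbar))) :=
        tendsto_dot tendsto_const_nhds (tendsto_const_nhds.sub hyslim)
      exact ge_of_tendsto hLm (Filter.Eventually.of_forall fun m => h1 _ (hys m))
    have h3 : v ⬝ᵥ (xstar - xbar) ≤ 0 := hv xstar hxstarcl
    have h5 : (xstar - xbar) ⬝ᵥ (xstar - xbar) ≤ v ⬝ᵥ (xstar - xbar) := by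
      have h4 : u - xstar = v + (xbar - xstar) := by rw [hu]; abel
      rw [h4, add_dotProduct] at h2
      have h6 : (xbar - xstar) ⬝ᵥ (xstar - xbar) =
          -((xstar - xbar) ⬝ᵥ (xstar - xbar)) := by
        have h7 : xbar - xstar = -(xstar - xbar) := by abel
        rw [h7, neg_dotProduct]
      rw [h6] at h2
      linarith
    have h8 : (xstar - xbar) ⬝ᵥ (xstar - xbar) = 0 :=
      le_antisymm (h5.trans h3) (dot_self_nonneg' _)
    have h9 : xstar = xbar := by
      have := dot_self_zero h8
      have h10 : xstar - xbar = 0 := this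
      rw [sub_eq_zero] at h10
      exact h10
    rw [← h9]
    exact hqlim
  -- define ek
  set ek : ℕ → Fin n → ℝ :=
    fun k => t k • ((hessMat φ (xk k))⁻¹ *ᵥ gradVec φ (xk k)) with hek
  obtain ⟨M, hM⟩ := hsup (R + 1) (by linarith)
  have hMnn : 0 ≤ M :=
    le_trans (norm_nonneg _) (hM _ (hxkC 0) (by linarith [hbound 0]))
  have heknorm : ∀ k, ‖ek k‖ ≤ t k * M := by
    intro k
    rw [hek]
    rw [norm_smul, Real.norm_eq_abs, abs_of_pos (htpos k)]
    exact mul_le_mul_of_nonneg_left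
      (hM _ (hxkC k) (by linarith [hbound k])) (htpos k).le
  have heklim : Tendsto ek atTop (𝓝 0) := by
    rw [tendsto_zero_iff_norm_tendsto_zero]
    refine squeeze_zero (fun k => norm_nonneg _) heknorm ?_
    simpa [htdef, one_div] using ht0.mul_const M
  have hHek : ∀ k, hessMat φ (xk k) *ᵥ ek k = u - xk k := by
    intro k
    rw [hek]
    rw [Matrix.mulVec_smul, Matrix.mulVec_mulVec,
      Matrix.mul_nonsing_inv _ (isUnit_iff_ne_zero.2 (hPD _ (hxkC k)).det_pos.ne'),
      Matrix.one_mulVec, ← hgrad k]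
  refine ⟨xk, ek, hxkC, hxklim, heklim, ?_⟩
  have : (fun k => hessMat φ (xk k) *ᵥ ek k) = fun k => u - xk k := funext hHek
  rw [this]
  have : Tendsto (fun k => u - xk k) atTop (𝓝 (u - xbar)) :=
    tendsto_const_nhds.sub hxklim
  have hub : u - xbar = v := by rw [hu]; abel
  rwa [hub] at this
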